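/- Let X be a measurable space equipped with a σ-finite measure α, and let p, q : X → ℝ≥0 be measurable with ∫ p dα = ∫ q dα = 1; set μ = α.withDensity p and ν = α.withDensity q. Assume x ↦ log(p(x)/(p(x)+q(x))) is μ-integrable and x ↦ log(q(x)/(p(x)+q(x))) is ν-integrable. Then ∫ log(p/(p+q)) dμ + ∫ log(q/(p+q)) dν ≥ −log 4, and equality holds if and only if μ = ν. -/

import Mathlib

open MeasureTheory Real
open scoped ENNReal NNReal

lemma gan_pointwise (a b : ℝ) (ha : 0 ≤ a) (hb : 0 ≤ b) :
    0 ≤ a * log (a/(a+b)) + b * log (b/(a+b)) + (a+b) * log 2 ∧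
    (a * log (a/(a+b)) + b * log (b/(a+b)) + (a+b) * log 2 = 0 ↔ a = b) := by
  rcases eq_or_lt_of_le (by linarith : (0:ℝ) ≤ a + b) with hs | hs
  · have ha0 : a = 0 := by linarith
    have hb0 : b = 0 := by linarith
    simp [ha0, hb0]
  · have hsne : a + b ≠ 0 := ne_of_gt hs
    have key : ∀ c : ℝ, 0 ≤ c → c * log (c / (a+b)) = c * log c - c * log (a+b) := by
      intro c hc
      rcases eq_or_lt_of_le hc with h0 | h0
      · simp [← h0]
      · rw [log_div (ne_of_gt h0) hsne]; ring
    rw [key a ha, key b hb]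
    have hconv : ((a+b)/2) * log ((a+b)/2) ≤ (a * log a + b * log b) / 2 := by
      have := Real.convexOn_mul_log.2 (Set.mem_Ici.mpr ha) (Set.mem_Ici.mpr hb)
        (by norm_num : (0:ℝ) ≤ 1/2) (by norm_num : (0:ℝ) ≤ 1/2) (by norm_num)
      simp only [smul_eq_mul] at this
      calc ((a+b)/2) * log ((a+b)/2) = (1/2*a + 1/2*b) * log (1/2*a + 1/2*b) := by ring_nf
        _ ≤ 1/2 * (a * log a) + 1/2 * (b * log b) := this
        _ = (a * log a + b * log b) / 2 := by ring
    have hlog : log ((a+b)/2) = log (a+b) - log 2 := log_div hsne (by norm_num)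
    constructor
    · nlinarith [hconv, hlog]
    · constructor
      · intro heq
        by_contra hab
        have := Real.strictConvexOn_mul_log.2 (Set.mem_Ici.mpr ha) (Set.mem_Ici.mpr hb) hab
          (by norm_num : (0:ℝ) < 1/2) (by norm_num : (0:ℝ) < 1/2) (by norm_num)
        simp only [smul_eq_mul] at this
        have hconv' : ((a+b)/2) * log ((a+b)/2) < (a * log a + b * log b) / 2 := by
          calc ((a+b)/2) * log ((a+b)/2) = (1/2*a + 1/2*b) * log (1/2*a + 1/2*b) := by ring_nf
            _ < 1/2 * (a * log a) + 1/2 * (b * log b) := this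
            _ = (a * log a + b * log b) / 2 := by ring
        nlinarith [hconv', hlog]
      · intro heq
        subst heq
        rcases eq_or_lt_of_le ha with h0 | h0
        · simp [← h0]
        · have : log (a+a) = log a + log 2 := by
            rw [show a+a = 2*a by ring, log_mul two_ne_zero (ne_of_gt h0)]
            ring
          rw [this]; ring

theorem gan_global_optimality
    {X : Type*} [MeasurableSpace X] (α : Measure X) [SigmaFinite α]
    (p q : X → ℝ≥0) (hp : Measurable p) (hq : Measurable q)
    (hp1 : ∫⁻ x, (p x : ℝ≥0∞) ∂α = 1) (hq1 : ∫⁻ x, (q x : ℝ≥0∞) ∂α = 1)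
    (h3 : Integrable (fun x => log ((p x : ℝ) / ((p x : ℝ) + (q x : ℝ))))
      (α.withDensity fun x => (p x : ℝ≥0∞)))
    (h4 : Integrable (fun x => log ((q x : ℝ) / ((p x : ℝ) + (q x : ℝ))))
      (α.withDensity fun x => (q x : ℝ≥0∞))) :
    (-log 4 ≤
      (∫ x, log ((p x : ℝ) / ((p x : ℝ) + (q x : ℝ)))
          ∂(α.withDensity fun x => (p x : ℝ≥0∞)))
        + ∫ x, log ((q x : ℝ) / ((p x : ℝ) + (q x : ℝ)))
          ∂(α.withDensity fun x => (q x : ℝ≥0∞))) ∧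
    ((∫ x, log ((p x : ℝ) / ((p x : ℝ) + (q x : ℝ)))
          ∂(α.withDensity fun x => (p x : ℝ≥0∞)))
        + (∫ x, log ((q x : ℝ) / ((p x : ℝ) + (q x : ℝ)))
          ∂(α.withDensity fun x => (q x : ℝ≥0∞))) = -log 4 ↔
      (α.withDensity fun x => (p x : ℝ≥0∞)) = (α.withDensity fun x => (q x : ℝ≥0∞))) := by
  set f₁ : X → ℝ := fun x => log ((p x : ℝ) / ((p x : ℝ) + (q x : ℝ))) with hf₁
  set f₂ : X → ℝ := fun x => log ((q x : ℝ) / ((p x : ℝ) + (q x : ℝ))) with hf₂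
  set g : X → ℝ := fun x =>
    (p x : ℝ) * f₁ x + (q x : ℝ) * f₂ x + ((p x : ℝ) + (q x : ℝ)) * log 2 with hg
  -- integrability transfers
  have hμint : Integrable (fun x => (p x : ℝ) * f₁ x) α := by
    have := (integrable_withDensity_iff_integrable_smul hp).mp h3
    simpa [NNReal.smul_def, smul_eq_mul] using this
  have hνint : Integrable (fun x => (q x : ℝ) * f₂ x) α := by
    have := (integrable_withDensity_iff_integrable_smul hq).mp h4
    simpa [NNReal.smul_def, smul_eq_mul] using this
  have hIp : Integrable (fun x => (p x : ℝ)) α := by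
    refine ⟨hp.coe_nnreal_real.aestronglyMeasurable, ?_⟩
    simp only [HasFiniteIntegral, NNReal.nnnorm_eq, hp1]
    simp only [Real.enorm_eq_ofReal (NNReal.coe_nonneg _), ENNReal.ofReal_coe_nnreal, hp1]
    exact ENNReal.one_lt_top
  have hIq : Integrable (fun x => (q x : ℝ)) α := by
    refine ⟨hq.coe_nnreal_real.aestronglyMeasurable, ?_⟩
    simp only [HasFiniteIntegral, NNReal.nnnorm_eq, hq1]
    simp only [Real.enorm_eq_ofReal (NNReal.coe_nonneg _), ENNReal.ofReal_coe_nnreal, hq1]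
    exact ENNReal.one_lt_top
  have hip : ∫ x, (p x : ℝ) ∂α = 1 := by
    rw [integral_eq_lintegral_of_nonneg_ae (Filter.Eventually.of_forall fun x => (p x).coe_nonneg)
      hp.coe_nnreal_real.aestronglyMeasurable]
    simp [ENNReal.ofReal_coe_nnreal, hp1]
  have hiq : ∫ x, (q x : ℝ) ∂α = 1 := by
    rw [integral_eq_lintegral_of_nonneg_ae (Filter.Eventually.of_forall fun x => (q x).coe_nonneg)
      hq.coe_nnreal_real.aestronglyMeasurable]
    simp [ENNReal.ofReal_coe_nnreal, hq1]
  have hgint : Integrable g α := (hμint.add hνint).add ((hIp.add hIq).mul_const (log 2))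
  have hlog4 : log 4 = 2 * log 2 := by
    rw [show (4:ℝ) = 2^2 by norm_num, log_pow]; push_cast; ring
  -- transfer integrals
  have hA : (∫ x, f₁ x ∂(α.withDensity fun x => (p x : ℝ≥0∞))) = ∫ x, (p x : ℝ) * f₁ x ∂α := by
    rw [integral_withDensity_eq_integral_smul hp]
    simp [NNReal.smul_def, smul_eq_mul]
  have hB : (∫ x, f₂ x ∂(α.withDensity fun x => (q x : ℝ≥0∞))) = ∫ x, (q x : ℝ) * f₂ x ∂α := by
    rw [integral_withDensity_eq_integral_smul hq]
    simp [NNReal.smul_def, smul_eq_mul]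
  have hgval : ∫ x, g x ∂α =
      (∫ x, (p x : ℝ) * f₁ x ∂α) + (∫ x, (q x : ℝ) * f₂ x ∂α) + log 4 := by
    calc ∫ x, g x ∂α
        = (∫ x, ((p x : ℝ) * f₁ x + (q x : ℝ) * f₂ x) ∂α)
            + ∫ x, ((p x : ℝ) + (q x : ℝ)) * log 2 ∂α :=
          integral_add (hμint.add hνint) ((hIp.add hIq).mul_const (log 2))
      _ = ((∫ x, (p x : ℝ) * f₁ x ∂α) + ∫ x, (q x : ℝ) * f₂ x ∂α)
            + (∫ x, ((p x : ℝ) + (q x : ℝ)) ∂α) * log 2 := by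
          rw [integral_add hμint hνint, integral_mul_const]
      _ = (∫ x, (p x : ℝ) * f₁ x ∂α) + (∫ x, (q x : ℝ) * f₂ x ∂α) + log 4 := by
          rw [integral_add hIp hIq, hip, hiq, hlog4]; ring
  have key : ∀ x, 0 ≤ g x ∧ (g x = 0 ↔ (p x : ℝ) = (q x : ℝ)) := fun x =>
    gan_pointwise (p x : ℝ) (q x : ℝ) (p x).coe_nonneg (q x).coe_nonneg
  have hg_nonneg : ∀ x, 0 ≤ g x := fun x => (key x).1
  have hintg_nonneg : 0 ≤ ∫ x, g x ∂α := integral_nonneg hg_nonneg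
  constructor
  · rw [hA, hB]; linarith [hgval ▸ hintg_nonneg]
  · constructor
    · intro heq
      rw [hA, hB] at heq
      have hzero : ∫ x, g x ∂α = 0 := by rw [hgval]; linarith
      have hae : g =ᵐ[α] 0 :=
        (integral_eq_zero_iff_of_nonneg hg_nonneg hgint).mp hzero
      refine withDensity_congr_ae ?_
      filter_upwards [hae] with x hx
      have : (p x : ℝ) = (q x : ℝ) := (key x).2.mp hx
      have hpq : p x = q x := NNReal.coe_injective this
      rw [hpq]
    · intro hmeas
      have pq_ae : (fun x => (p x : ℝ≥0∞)) =ᵐ[α] (fun x => (q x : ℝ≥0∞)) :=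
        (withDensity_eq_iff_of_sigmaFinite hp.coe_nnreal_ennreal.aemeasurable
          hq.coe_nnreal_ennreal.aemeasurable).mp hmeas
      have hgae : g =ᵐ[α] 0 := by
        filter_upwards [pq_ae] with x hx
        have hpq : (p x : ℝ) = (q x : ℝ) := by exact_mod_cast hx
        exact (key x).2.mpr hpq
      have hzero : ∫ x, g x ∂α = 0 := by
        rw [integral_congr_ae hgae]; simp
      rw [hA, hB]
      have := hgval ▸ hzero
      linarith
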